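/- Let f = 1 + ∑_{m≥1} a(m) w^m be a formal power series with integer coefficients a(m), let n ≥ 1 be a natural number, and let g = ∑_{m≥0} b(m) w^m be the formal n-th root of f given by the binomial series, so b(m) ∈ ℤ[1/n]. If p is a prime dividing n and some coefficient b(m) is not p-integral (i.e., ord_p(b(m)) < 0), then limsup_{m→∞} (−ord_p(b(m))) = ∞; that is, the p-adic valuations of the coefficients b(m) are unbounded below. -/

import Mathlib

open PowerSeries

/-- Let `f = 1 + ∑_{m≥1} a(m) wᵐ` have integer coefficients, let `n ≥ 1`, and let
`g = ∑ b(m) wᵐ` be the formal `n`-th root of `f` (the unique power series with constant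
term `1` and `gⁿ = f`, given by the binomial series). If `p` is a prime dividing `n` and
some coefficient `b(m)` is not `p`-integral, then `limsup_{m→∞} (−ord_p(b(m))) = ∞`:
the `p`-adic valuations of the `b(m)` are unbounded below. -/
theorem unbounded_denominators_of_nth_root (n : ℕ) (hn : 1 ≤ n) (p : ℕ) (hp : p.Prime)
    (hpn : p ∣ n) (a : ℕ → ℤ) (F G : PowerSeries ℚ)
    (hF : F = PowerSeries.mk fun m => if m = 0 then 1 else (a m : ℚ))
    (hroot : G ^ n = F) (hG0 : PowerSeries.constantCoeff G = 1)
    (b : ℕ → ℚ) (hb : ∀ m, b m = PowerSeries.coeff m G)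
    (hbad : ∃ m, b m ≠ 0 ∧ padicValRat p (b m) < 0) :
    ∀ C : ℤ, ∀ N : ℕ, ∃ m, N ≤ m ∧ b m ≠ 0 ∧ padicValRat p (b m) < C := by
  haveI : Fact p.Prime := ⟨hp⟩
  have hp0 : (0:ℝ) < p := by exact_mod_cast hp.pos
  have hp1 : (1:ℝ) < p := by exact_mod_cast hp.one_lt
  have hnormval : ∀ q : ℚ, q ≠ 0 → ‖(q : ℚ_[p])‖ = (p:ℝ) ^ (-padicValRat p q) := by
    intro q hq
    rw [Padic.eq_padicNorm, padicNorm.eq_zpow_of_nonzero hq]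
    push_cast
    ring
  have toZMod_zero : ∀ x : ℤ_[p], ‖x‖ < 1 → PadicInt.toZMod x = 0 := by
    intro x hx
    rw [← RingHom.mem_ker, PadicInt.ker_toZMod, PadicInt.maximalIdeal_eq_span_p,
      Ideal.mem_span_singleton, ← PadicInt.norm_lt_one_iff_dvd]
    exact hx
  have toZMod_zero' : ∀ x : ℤ_[p], PadicInt.toZMod x = 0 → ‖x‖ < 1 := by
    intro x hx
    rw [PadicInt.norm_lt_one_iff_dvd, ← Ideal.mem_span_singleton,
      ← PadicInt.maximalIdeal_eq_span_p, ← PadicInt.ker_toZMod]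
    exact hx
  have hinv : ∀ k : ℕ, ((p:ℝ)⁻¹)^(k+1) = (p:ℝ) ^ (-((k:ℤ)+1)) := by
    intro k
    rw [inv_pow, ← zpow_natCast, ← zpow_neg]
    norm_cast
  -- the descent step
  have descent : ∀ k : ℕ, (∀ m, ‖(b m : ℚ_[p])‖ ≤ (p:ℝ) ^ ((k:ℤ)+1)) →
      ∀ m, ‖(b m : ℚ_[p])‖ ≤ (p:ℝ) ^ (k:ℤ) := by
    intro k hk
    have hHc : ∀ m, ‖(p:ℚ_[p])^(k+1) * (b m : ℚ_[p])‖ ≤ 1 := by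
      intro m
      rw [norm_mul, norm_pow, Padic.norm_p, hinv k]
      calc (p:ℝ) ^ (-((k:ℤ)+1)) * ‖(b m : ℚ_[p])‖
          ≤ (p:ℝ) ^ (-((k:ℤ)+1)) * (p:ℝ) ^ ((k:ℤ)+1) := by
            have := hk m
            gcongr
        _ = 1 := by
            rw [← zpow_add₀ (ne_of_gt hp0), show -((k:ℤ)+1) + ((k:ℤ)+1) = 0 by ring, zpow_zero]
    set H : PowerSeries ℤ_[p] :=
      PowerSeries.mk fun m => (⟨(p:ℚ_[p])^(k+1) * (b m : ℚ_[p]), hHc m⟩ : ℤ_[p]) with hH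
    set ι : ℤ_[p] →+* ℚ_[p] := PadicInt.Coe.ringHom with hι
    set φ : ℚ →+* ℚ_[p] := Rat.castHom _ with hφ
    have hmapH : PowerSeries.map ι H = ((p:ℚ_[p])^(k+1)) • PowerSeries.map φ G := by
      ext m
      simp only [hH, PowerSeries.coeff_map, PowerSeries.coeff_smul, hι, hφ, smul_eq_mul,
        PowerSeries.coeff_mk, ← hb m]
      erw [PowerSeries.coeff_mk]
      rfl
    have hpowH : PowerSeries.map ι (H ^ n) = ((p:ℚ_[p])^(k+1))^n • PowerSeries.map φ F := by
      rw [map_pow, hmapH, smul_pow, ← map_pow, hroot]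
    have keynorm : ∀ m, ‖PowerSeries.coeff m (H ^ n)‖ < 1 := by
      intro m
      have hc : ι (PowerSeries.coeff m (H ^ n))
          = ((p:ℚ_[p])^(k+1))^n * φ (PowerSeries.coeff m F) := by
        have := congrArg (PowerSeries.coeff m) hpowH
        simp only [PowerSeries.coeff_map, PowerSeries.coeff_smul, smul_eq_mul] at this
        exact this
      have hnd : ‖PowerSeries.coeff m (H ^ n)‖
          = ‖ι (PowerSeries.coeff m (H ^ n))‖ := rfl
      have hF1 : ‖φ (PowerSeries.coeff m F)‖ ≤ 1 := by
        rw [hF, PowerSeries.coeff_mk]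
        split_ifs
        · simp
        · have h2 : φ ((a m : ℚ)) = ((a m : ℤ) : ℚ_[p]) := by push_cast [hφ]; simp
          rw [h2]
          exact Padic.norm_int_le_one _
      rw [hnd, hc, norm_mul, norm_pow, norm_pow, Padic.norm_p]
      have hlt : (((p:ℝ)⁻¹)^(k+1))^n < 1 := by
        apply pow_lt_one₀ (by positivity) _ (by omega)
        apply pow_lt_one₀ (by positivity) _ (by omega)
        rw [inv_lt_one_iff₀]
        right; exact hp1
      calc (((p:ℝ)⁻¹)^(k+1))^n * ‖φ (PowerSeries.coeff m F)‖
          ≤ (((p:ℝ)⁻¹)^(k+1))^n * 1 := by gcongr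
        _ < 1 := by simpa using hlt
    have hz : PowerSeries.map (PadicInt.toZMod (p := p)) H = 0 := by
      have hzn : (PowerSeries.map (PadicInt.toZMod (p := p)) H) ^ n = 0 := by
        rw [← map_pow]
        ext m
        simp only [PowerSeries.coeff_map, map_zero]
        exact toZMod_zero _ (keynorm m)
      exact (pow_eq_zero_iff (by omega)).mp hzn
    intro m
    have hzm : PadicInt.toZMod (PowerSeries.coeff m H) = 0 := by
      have := congrArg (PowerSeries.coeff m) hz
      simpa [PowerSeries.coeff_map] using this
    have h3 : ‖PowerSeries.coeff m H‖ < 1 := toZMod_zero' _ hzm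
    have h4 : ‖PowerSeries.coeff m H‖ ≤ (p:ℝ)^(-1:ℤ) := by
      have := (PadicInt.norm_lt_pow_iff_norm_le_pow_sub_one (PowerSeries.coeff m H) 0).mp
        (by simpa using h3)
      simpa using this
    have h5 : ‖(p:ℚ_[p])^(k+1) * (b m : ℚ_[p])‖ ≤ (p:ℝ)^(-1:ℤ) := by
      rw [hH] at h4
      erw [PowerSeries.coeff_mk] at h4
      exact h4
    rw [norm_mul, norm_pow, Padic.norm_p, hinv k] at h5
    have h6 : ‖(b m:ℚ_[p])‖ = (p:ℝ)^((k:ℤ)+1) * ((p:ℝ)^(-((k:ℤ)+1)) * ‖(b m:ℚ_[p])‖) := by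
      rw [← mul_assoc, ← zpow_add₀ (ne_of_gt hp0),
        show (k:ℤ)+1 + -((k:ℤ)+1) = 0 by ring, zpow_zero, one_mul]
    rw [h6]
    calc (p:ℝ)^((k:ℤ)+1) * ((p:ℝ)^(-((k:ℤ)+1)) * ‖(b m:ℚ_[p])‖)
        ≤ (p:ℝ)^((k:ℤ)+1) * (p:ℝ)^(-1:ℤ) := by gcongr
      _ = (p:ℝ)^(k:ℤ) := by
          rw [← zpow_add₀ (ne_of_gt hp0), show (k:ℤ)+1+(-1:ℤ) = (k:ℤ) by ring]
  -- full descent by induction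
  have bound_all : ∀ k : ℕ, (∀ m, ‖(b m : ℚ_[p])‖ ≤ (p:ℝ)^(k:ℤ)) →
      ∀ m, ‖(b m : ℚ_[p])‖ ≤ 1 := by
    intro k
    induction k with
    | zero => intro h m; simpa using h m
    | succ k ih =>
        intro h
        refine ih (descent k ?_)
        intro m
        have hmm := h m
        rwa [show (((k+1:ℕ)) : ℤ) = (k:ℤ)+1 by push_cast; ring_nf] at hmm
  -- valuations are unbounded below
  have main : ∀ C : ℤ, ∃ m, b m ≠ 0 ∧ padicValRat p (b m) < C := by
    intro C
    by_contra hcon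
    push_neg at hcon
    set k : ℕ := (-C).toNat with hk
    have hbound : ∀ m, ‖(b m : ℚ_[p])‖ ≤ (p:ℝ)^(k:ℤ) := by
      intro m
      by_cases hm : b m = 0
      · rw [hm]
        simp only [Rat.cast_zero, norm_zero]
        positivity
      · rw [hnormval _ hm, zpow_le_zpow_iff_right₀ hp1]
        have h1 := hcon m hm
        have h2 : -C ≤ ((-C).toNat : ℤ) := Int.self_le_toNat _
        omega
    have hall := bound_all k hbound
    obtain ⟨m, hm0, hmval⟩ := hbad
    have h1 := hall m
    rw [hnormval _ hm0] at h1
    have h2 : (p:ℝ)^(-padicValRat p (b m)) ≤ (p:ℝ)^(0:ℤ) := by simpa using h1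
    have h3 := (zpow_le_zpow_iff_right₀ hp1).mp h2
    omega
  -- conclude with the N part
  intro C N
  set T : Finset ℤ := insert C ((Finset.range N).image fun m => padicValRat p (b m)) with hT
  have hTne : T.Nonempty := ⟨C, Finset.mem_insert_self _ _⟩
  obtain ⟨m, hm0, hmval⟩ := main (T.min' hTne)
  refine ⟨m, ?_, hm0, lt_of_lt_of_le hmval (Finset.min'_le _ _ (Finset.mem_insert_self _ _))⟩
  by_contra hmN
  push_neg at hmN
  have hmem : padicValRat p (b m) ∈ T :=
    Finset.mem_insert_of_mem (Finset.mem_image_of_mem _ (Finset.mem_range.mpr hmN))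
  exact absurd hmval (not_lt.mpr (Finset.min'_le _ _ hmem))
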